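/- Let X ⊂ P^n (n ≥ 1) be a hypersurface over F_q of degree d that is space-filling, i.e., X(F_q) = P^n(F_q). Then d ≥ q+1. -/

import Mathlib

open MvPolynomial

lemma finsupp_degree_single {σ : Type*} (i : σ) (k : ℕ) :
    (Finsupp.single i k).degree = k := by
  classical
  rcases eq_or_ne k 0 with rfl | hk
  · simp [Finsupp.degree]
  · simp [Finsupp.degree_apply, Finsupp.support_single_ne_zero _ hk]

/-- universe-polymorphic version of `MvPolynomial.eq_zero_of_eval_eq_zero` -/
lemma eq_zero_of_eval_eq_zero' {K : Type*} [Field K] [Fintype K] {σ : Type} [Finite σ]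
    (p : MvPolynomial σ K) (h : ∀ v : σ → K, eval v p = 0)
    (hp : ∀ s ∈ p.support, ∀ i, s i ≤ Fintype.card K - 1) : p = 0 := by
  classical
  set e : σ → ULift σ := ULift.up with he
  have heinj : Function.Injective e := fun a b hab => congrArg ULift.down hab
  have key : rename e p = 0 := by
    apply MvPolynomial.eq_zero_of_eval_eq_zero
    · intro v
      rw [eval_rename]
      exact h _
    · rw [mem_restrictDegree]
      intro s hs i
      rw [support_rename_of_injective heinj, Finset.mem_image] at hs
      obtain ⟨t, ht, rfl⟩ := hs
      obtain ⟨j⟩ := i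
      rw [show ULift.up j = e j from rfl, Finsupp.mapDomain_apply heinj]
      exact hp t ht j
  exact rename_injective e heinj (by rwa [map_zero])

/-- A space-filling hypersurface X = {F=0} ⊂ P^n over F_q (n ≥ 1), i.e. one with
X(F_q) = P^n(F_q), has degree at least q+1. -/
theorem stmt12 {F : Type*} [Field F] [Fintype F] (q d n : ℕ)
    (hq : Fintype.card F = q) (hn : 1 ≤ n)
    (f : MvPolynomial (Fin (n + 1)) F) (hf0 : f ≠ 0) (hhom : f.IsHomogeneous d)
    (hfill : ∀ b : Fin (n + 1) → F, b ≠ 0 → eval b f = 0) :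
    q + 1 ≤ d := by
  classical
  subst hq
  set q := Fintype.card F with hqdef
  have hq2 : 2 ≤ q := Fintype.one_lt_card
  by_contra hlt
  push_neg at hlt
  have hd_le : d ≤ q := Nat.lt_succ_iff.mp hlt
  -- the all-ones vector is nonzero
  have hone : (fun _ : Fin (n + 1) => (1 : F)) ≠ 0 := by
    intro h
    exact one_ne_zero (congrFun h 0)
  -- d ≥ 1
  have hd1 : 1 ≤ d := by
    by_contra hd0
    have hd0 : d = 0 := by omega
    subst hd0
    have hfc : f = C (coeff 0 f) := by
      ext s
      rw [coeff_C]
      split_ifs with hs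
      · subst hs; rfl
      · exact hhom.coeff_eq_zero
          (fun h0 => hs ((Finsupp.degree_eq_zero_iff _).mp h0).symm)
    have h1 := hfill _ hone
    rw [hfc, eval_C] at h1
    exact hf0 (by rw [hfc, h1, map_zero])
  -- f vanishes everywhere
  have hall : ∀ v : Fin (n + 1) → F, eval v f = 0 := by
    intro v
    rcases eq_or_ne v 0 with rfl | hv
    · rw [show (0 : Fin (n + 1) → F) = fun _ => 0 from rfl, eval_zero']
      exact hhom.coeff_eq_zero (by
        rw [show ((0 : Fin (n+1) →₀ ℕ)).degree = 0 from (Finsupp.degree_eq_zero_iff _).mpr rfl]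
        omega)
    · exact hfill v hv
  set c : Fin (n + 1) → F := fun i => coeff (Finsupp.single i q) f with hc
  set h : MvPolynomial (Fin (n + 1)) F :=
    f - ∑ i, C (c i) * X i ^ q + ∑ i, C (c i) * X i with hh
  have hcoeff : ∀ s : Fin (n + 1) →₀ ℕ, coeff s h =
      coeff s f - ∑ i, c i * (if Finsupp.single i q = s then 1 else 0)
        + ∑ i, c i * (if Finsupp.single i 1 = s then 1 else 0) := by
    intro s
    simp [hh, coeff_sum, coeff_X_pow, coeff_X', mul_ite]
  -- h has all variable degrees < q
  have hsupp : ∀ s ∈ h.support, ∀ i, s i ≤ q - 1 := by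
    intro s hs i
    by_contra hsi
    push_neg at hsi
    have hsi : q ≤ s i := by omega
    rw [mem_support_iff] at hs
    apply hs
    rw [hcoeff]
    have hX1 : ∀ j : Fin (n + 1), Finsupp.single j 1 ≠ s := by
      intro j hj
      have h2 := DFunLike.congr_fun hj i
      simp only [Finsupp.single_apply] at h2
      split_ifs at h2 <;> omega
    rcases eq_or_ne s (Finsupp.single i q) with rfl | hne
    · have hXq : ∀ j : Fin (n + 1),
          (Finsupp.single j q = Finsupp.single i q) ↔ j = i :=
        fun j => Finsupp.single_left_inj (by omega)
      simp [hXq, hX1, mul_ite, Finset.sum_ite_eq', c]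
    · -- s is not of the form single j q, and s i ≥ q, so coeff s f = 0
      have hXq : ∀ j : Fin (n + 1), Finsupp.single j q ≠ s := by
        intro j hj
        rcases eq_or_ne j i with rfl | hji
        · exact hne hj.symm
        · have h2 := DFunLike.congr_fun hj i
          simp only [Finsupp.single_apply, if_neg hji] at h2
          omega
      have hcf : coeff s f = 0 := by
        apply hhom.coeff_eq_zero
        intro hds
        have hle : s i ≤ s.degree := Finsupp.le_degree i s
        have hsiq : s i = q := by omega
        apply hne
        ext j
        rcases eq_or_ne j i with rfl | hji
        · simp [Finsupp.single_apply, hsiq]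
        · simp only [Finsupp.single_apply, if_neg (Ne.symm hji)]
          by_contra hj0
          have himem : i ∈ s.support := by rw [Finsupp.mem_support_iff]; omega
          have hjmem : j ∈ s.support := by rw [Finsupp.mem_support_iff]; omega
          have hij : s i + s j ≤ s.degree := by
            rw [Finsupp.degree]
            calc s i + s j = ∑ k ∈ {i, j}, s k := by rw [Finset.sum_pair hji.symm]
              _ ≤ ∑ k ∈ s.support, s k := Finset.sum_le_sum_of_subset (by
                  intro k hk
                  simp only [Finset.mem_insert, Finset.mem_singleton] at hk
                  rcases hk with rfl | rfl <;> assumption)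
          omega
      simp [hcf, hX1, hXq]
  -- h vanishes everywhere
  have heval : ∀ v : Fin (n + 1) → F, eval v h = 0 := by
    intro v
    simp only [hh, map_add, map_sub, map_sum, map_mul, map_pow, eval_C, eval_X,
      hall v, hqdef, FiniteField.pow_card]
    ring
  have hzero : h = 0 := eq_zero_of_eval_eq_zero' h heval hsupp
  -- all the c i vanish
  have hcz : ∀ i, c i = 0 := by
    intro i
    rcases eq_or_ne d q with rfl | hdq
    · -- use coefficient of single i 1 in h
      have h1 : coeff (Finsupp.single i 1) h = 0 := by rw [hzero]; simp
      rw [hcoeff] at h1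
      have hXq : ∀ j : Fin (n + 1), Finsupp.single j q ≠ Finsupp.single i 1 := by
        intro j hj
        have h2 := congrArg Finsupp.degree hj
        rw [finsupp_degree_single, finsupp_degree_single] at h2
        omega
      have hX1 : ∀ j : Fin (n + 1),
          (Finsupp.single j 1 = Finsupp.single i 1) ↔ j = i :=
        fun j => Finsupp.single_left_inj one_ne_zero
      have hcf : coeff (Finsupp.single i 1) f = 0 :=
        hhom.coeff_eq_zero (by rw [finsupp_degree_single]; omega)
      simp [hcf, hXq, hX1] at h1
      exact h1
    · exact hhom.coeff_eq_zero (by rw [finsupp_degree_single]; exact Ne.symm hdq)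
  apply hf0
  have hfeq : f = h + ∑ i, C (c i) * X i ^ q - ∑ i, C (c i) * X i := by
    rw [hh]; ring
  simp only [hfeq, hzero]
  simp [hcz]
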